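/- The Jacobian of the map φ : ℝ² → Sym(3,ℝ) at the point (2,0) is injective; in particular the partial derivatives of the entries (φ)₁₁ and (φ)₂₃ with respect to x and y form an invertible 2×2 matrix at (2,0). -/

import Mathlib

open Matrix

noncomputable def r1 (x y : ℝ) : ℝ := Real.sqrt (4 + x^2 + 4*x^2*y^2)
noncomputable def r2 (x y : ℝ) : ℝ := Real.sqrt (4 + 4*y^2 + x^2*y^2)

noncomputable def phi (x y : ℝ) : Matrix (Fin 3) (Fin 3) ℝ :=
  ((r1 x y)^2 * (r2 x y)^2)⁻¹ •
    !![(4 - x^2) * (r2 x y)^2,  2*x*(r2 x y)^3,  0;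
       2*x*(r2 x y)^3,  -4*(4 - x^2 - 4*x^2*y^4 + x^4*y^4),  2*y*(r1 x y)^3;
       0,  2*y*(r1 x y)^3,  y^2*(x^2 - 4)*(r1 x y)^2]

noncomputable def TX : Matrix (Fin 3) (Fin 3) ℝ := !![0,1,0;1,0,0;0,0,0]

noncomputable def PhiFun : ℝ × ℝ → (Fin 3 → Fin 3 → ℝ) :=
  fun p i j => phi p.1 p.2 i j

/-- The 2×2 matrix of partial derivatives of the entries (φ)₁₁ and (φ)₂₃
with respect to x and y, at the point (2,0). -/
noncomputable def Jac : Matrix (Fin 2) (Fin 2) ℝ :=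
  !![deriv (fun x => phi x 0 0 0) 2, deriv (fun y => phi 2 y 0 0) 0;
     deriv (fun x => phi x 0 1 2) 2, deriv (fun y => phi 2 y 1 2) 0]

lemma fin_mk_two (h : 2 < 3) : (⟨2, h⟩ : Fin 3) = (2 : Fin 3) := rfl

lemma sq1 (x y : ℝ) : (r1 x y)^2 = 4 + x^2 + 4*x^2*y^2 := by
  rw [r1, Real.sq_sqrt (by positivity)]

lemma sq2 (x y : ℝ) : (r2 x y)^2 = 4 + 4*y^2 + x^2*y^2 := by
  rw [r2, Real.sq_sqrt (by positivity)]

lemma phi00x (x : ℝ) : phi x 0 0 0 = (4 - x^2)/(4 + x^2) := by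
  have h1 := sq1 x 0
  have h2 := sq2 x 0
  simp only [phi, Matrix.smul_apply, Matrix.cons_val_zero, Matrix.cons_val_one,
    Matrix.head_cons, Matrix.of_apply, Matrix.cons_val', Matrix.empty_val',
    Matrix.cons_val_fin_one, smul_eq_mul, h1, h2]
  have : (4:ℝ) + x^2 ≠ 0 := by positivity
  field_simp
  ring

lemma phi12x (x : ℝ) : phi x 0 1 2 = 0 := by
  simp [phi, Matrix.smul_apply]

lemma phi00y (y : ℝ) : phi 2 y 0 0 = 0 := by
  simp only [phi, Matrix.smul_apply, Matrix.cons_val_zero, Matrix.of_apply,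
    Matrix.cons_val', Matrix.empty_val', Matrix.cons_val_fin_one, smul_eq_mul]
  norm_num

lemma phi12y (y : ℝ) :
    phi 2 y 1 2 = 2*y*Real.sqrt (8+16*y^2)/(4+8*y^2) := by
  have e1 : r1 2 y = Real.sqrt (8+16*y^2) := by rw [r1]; norm_num
  have h1 : (r1 2 y)^2 = 8 + 16*y^2 := by rw [sq1]; ring
  have h2 : (r2 2 y)^2 = 4 + 8*y^2 := by rw [sq2]; ring
  have h3 : (r1 2 y)^3 = (8+16*y^2) * Real.sqrt (8+16*y^2) := by
    rw [pow_succ, h1, e1]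
  have hne1 : (8:ℝ) + 16*y^2 ≠ 0 := by positivity
  have hne2 : (4:ℝ) + 8*y^2 ≠ 0 := by positivity
  simp only [phi, Matrix.smul_apply, Matrix.cons_val_one, Matrix.head_cons,
    Matrix.cons_val_two, Matrix.tail_cons, Matrix.of_apply, Matrix.cons_val',
    Matrix.empty_val', Matrix.cons_val_fin_one, smul_eq_mul, h1, h2, h3]
  field_simp
  simp

lemma derivA : HasDerivAt (fun x : ℝ => (4 - x^2)/(4 + x^2)) (-1/2 : ℝ) 2 := by
  have hn : HasDerivAt (fun x : ℝ => 4 - x^2) (-(2*2^1)) 2 := by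
    simpa using (hasDerivAt_pow 2 (2:ℝ)).const_sub 4
  have hd : HasDerivAt (fun x : ℝ => 4 + x^2) (2*2^1) 2 := by
    simpa using (hasDerivAt_pow 2 (2:ℝ)).const_add 4
  have := hn.div hd (by norm_num)
  exact this.congr_deriv (by norm_num)

lemma derivB : HasDerivAt (fun y : ℝ => 2*y*Real.sqrt (8+16*y^2)/(4+8*y^2))
    (Real.sqrt 8 / 2) 0 := by
  have h1 : HasDerivAt (fun y : ℝ => 8 + 16*y^2) (16*(2*0^1)) 0 := by
    simpa using ((hasDerivAt_pow 2 (0:ℝ)).const_mul (16:ℝ)).const_add 8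
  have h2 : HasDerivAt (fun y : ℝ => Real.sqrt (8+16*y^2))
      ((16*(2*0^1)) / (2 * Real.sqrt (8+16*0^2))) 0 := h1.sqrt (by norm_num)
  have h3 : HasDerivAt (fun y : ℝ => 2*y) 2 0 := by
    simpa using (hasDerivAt_id (0:ℝ)).const_mul (2:ℝ)
  have h4 := h3.mul h2
  have h5 : HasDerivAt (fun y : ℝ => 4 + 8*y^2) (8*(2*0^1)) 0 := by
    simpa using ((hasDerivAt_pow 2 (0:ℝ)).const_mul (8:ℝ)).const_add 4
  have h6 := h4.div h5 (by norm_num)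
  exact h6.congr_deriv (by norm_num; ring)

theorem stmt_6 :
    (∃ D : ℝ × ℝ →L[ℝ] (Fin 3 → Fin 3 → ℝ),
      HasFDerivAt PhiFun D (2, 0) ∧ Function.Injective D) ∧
    Jac.det ≠ 0 := by
  -- the four entry derivatives
  have hfA : (fun x => phi x 0 0 0) = fun x : ℝ => (4 - x^2)/(4 + x^2) :=
    funext phi00x
  have hfB : (fun y => phi 2 y 1 2) = fun y : ℝ => 2*y*Real.sqrt (8+16*y^2)/(4+8*y^2) :=
    funext phi12y
  have hfC : (fun y => phi 2 y 0 0) = fun _ : ℝ => (0:ℝ) := funext phi00y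
  have hfD : (fun x => phi x 0 1 2) = fun _ : ℝ => (0:ℝ) := funext phi12x
  have hA : HasDerivAt (fun x => phi x 0 0 0) (-1/2 : ℝ) 2 := by rw [hfA]; exact derivA
  have hB : HasDerivAt (fun y => phi 2 y 1 2) (Real.sqrt 8 / 2) 0 := by
    rw [hfB]; exact derivB
  have hC : HasDerivAt (fun y => phi 2 y 0 0) 0 0 := by rw [hfC]; exact hasDerivAt_const _ _
  have hD' : HasDerivAt (fun x => phi x 0 1 2) 0 2 := by rw [hfD]; exact hasDerivAt_const _ _
  have hs8 : Real.sqrt 8 > 0 := Real.sqrt_pos.mpr (by norm_num)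
  constructor
  · -- differentiability
    have hq1 : DifferentiableAt ℝ
        (fun p : ℝ × ℝ => Real.sqrt (4 + p.1^2 + 4*p.1^2*p.2^2)) (2,0) :=
      DifferentiableAt.sqrt (by fun_prop) (by norm_num)
    have hq2 : DifferentiableAt ℝ
        (fun p : ℝ × ℝ => Real.sqrt (4 + 4*p.2^2 + p.1^2*p.2^2)) (2,0) :=
      DifferentiableAt.sqrt (by fun_prop) (by norm_num)
    have hinv : DifferentiableAt ℝ
        (fun p : ℝ × ℝ => ((Real.sqrt (4 + p.1^2 + 4*p.1^2*p.2^2))^2 *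
          (Real.sqrt (4 + 4*p.2^2 + p.1^2*p.2^2))^2)⁻¹) (2,0) := by
      apply DifferentiableAt.inv ((hq1.pow 2).mul (hq2.pow 2))
      simp only [Pi.mul_apply, Pi.pow_apply]
      rw [Real.sq_sqrt (by norm_num), Real.sq_sqrt (by norm_num)]
      norm_num
    have hent : ∀ (i j : Fin 3),
        DifferentiableAt ℝ (fun p : ℝ × ℝ => phi p.1 p.2 i j) (2,0) := by
      intro i j
      fin_cases i <;> fin_cases j <;>
        simp only [phi, r1, r2, Matrix.smul_apply, Fin.mk_zero, Fin.mk_one, fin_mk_two,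
          Matrix.cons_val_zero, Matrix.cons_val_one, Matrix.head_cons,
          Matrix.cons_val_two, Matrix.tail_cons, Matrix.head_fin_const,
          Matrix.of_apply, Matrix.cons_val', Matrix.empty_val',
          Matrix.cons_val_fin_one, smul_eq_mul] <;>
        fun_prop
    have hPhi : DifferentiableAt ℝ PhiFun (2,0) := by
      rw [differentiableAt_pi]
      intro i
      rw [differentiableAt_pi]
      intro j
      exact hent i j
    refine ⟨fderiv ℝ PhiFun (2,0), hPhi.hasFDerivAt, ?_⟩
    set D := fderiv ℝ PhiFun (2,0) with hDdef
    have hFD : HasFDerivAt PhiFun D (2,0) := hPhi.hasFDerivAt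
    -- derivatives along coordinate lines
    have hline1 : HasDerivAt (fun x : ℝ => ((x, (0:ℝ)) : ℝ × ℝ)) ((1:ℝ),(0:ℝ)) 2 :=
      HasDerivAt.prodMk (hasDerivAt_id (2:ℝ)) (hasDerivAt_const (2:ℝ) (0:ℝ))
    have hline2 : HasDerivAt (fun y : ℝ => (((2:ℝ), y) : ℝ × ℝ)) ((0:ℝ),(1:ℝ)) 0 :=
      HasDerivAt.prodMk (hasDerivAt_const (0:ℝ) (2:ℝ)) (hasDerivAt_id (0:ℝ))
    have hc1 : HasDerivAt (fun x : ℝ => PhiFun (x,0)) (D (1,0)) 2 :=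
      HasFDerivAt.comp_hasDerivAt (l := PhiFun) (f := fun x : ℝ => ((x, (0:ℝ)) : ℝ × ℝ)) 2 hFD hline1
    have hc2 : HasDerivAt (fun y : ℝ => PhiFun (2,y)) (D (0,1)) 0 :=
      hFD.comp_hasDerivAt 0 hline2
    have e1 : D (1,0) 0 0 = -1/2 :=
      (hasDerivAt_pi.1 (hasDerivAt_pi.1 hc1 0) 0).unique hA
    have e2 : D (1,0) 1 2 = 0 :=
      (hasDerivAt_pi.1 (hasDerivAt_pi.1 hc1 1) 2).unique hD'
    have e3 : D (0,1) 0 0 = 0 :=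
      (hasDerivAt_pi.1 (hasDerivAt_pi.1 hc2 0) 0).unique hC
    have e4 : D (0,1) 1 2 = Real.sqrt 8 / 2 :=
      (hasDerivAt_pi.1 (hasDerivAt_pi.1 hc2 1) 2).unique hB
    intro u v huv
    have hw : D (u - v) = 0 := by rw [map_sub, huv, sub_self]
    have hdecomp : u - v = (u-v).1 • ((1:ℝ),(0:ℝ)) + (u-v).2 • ((0:ℝ),(1:ℝ)) := by
      ext <;> simp
    have hDw : D (u - v) = (u-v).1 • D (1,0) + (u-v).2 • D (0,1) := by
      conv_lhs => rw [hdecomp]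
      rw [ContinuousLinearMap.map_add, ContinuousLinearMap.map_smul,
        ContinuousLinearMap.map_smul]
    have h00 : (u-v).1 * (-1/2) + (u-v).2 * 0 = 0 := by
      have := congrFun (congrFun (hDw.symm.trans hw) 0) 0
      simpa [e1, e3] using this
    have h12 : (u-v).1 * 0 + (u-v).2 * (Real.sqrt 8 / 2) = 0 := by
      have := congrFun (congrFun (hDw.symm.trans hw) 1) 2
      simpa [e2, e4] using this
    have hu1 : (u-v).1 = 0 := by linarith [h00]
    have hu2 : (u-v).2 = 0 := by
      have h8 : Real.sqrt 8 / 2 ≠ 0 := by positivity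
      rcases mul_eq_zero.mp (by linarith [h12] : (u-v).2 * (Real.sqrt 8 / 2) = 0) with h | h
      · exact h
      · exact absurd h h8
    have : u - v = 0 := Prod.ext hu1 hu2
    exact sub_eq_zero.mp this
  · -- Jacobian determinant
    have dA : deriv (fun x => phi x 0 0 0) 2 = -1/2 := hA.deriv
    have dB : deriv (fun y => phi 2 y 1 2) 0 = Real.sqrt 8 / 2 := hB.deriv
    have dC : deriv (fun y => phi 2 y 0 0) 0 = 0 := hC.deriv
    have dD : deriv (fun x => phi x 0 1 2) 2 = 0 := hD'.deriv
    rw [Jac, Matrix.det_fin_two_of, dA, dB, dC, dD]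
    have : (-1/2 : ℝ) * (Real.sqrt 8 / 2) < 0 := by
      apply mul_neg_of_neg_of_pos (by norm_num) (by positivity)
    intro h
    rw [mul_zero, sub_zero] at h  -- h : -1/2 * (√8/2) = 0
    linarith
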